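/- arXiv:2605.11877 — 2 statements merged into one kernel-verified Lean document; each statement's English description precedes it below -/
import Mathlib

section
/- Let X have the inverse Gaussian distribution with parameters μ̂ = α > 0 and λ = α²/ε^{2p}, ε ∈ (0,1), p > 1. Then for every δ with 0 < δ < min{1, α/2}, P(X ≤ α - δ) ≤ (ε^p/δ)·√(α/(2π))·exp(-δ²/(2αε^{2p})) + (ε^p/√(8πα))·exp(-δ²/(2αε^{2p})). -/
open MeasureTheory Real Set

open Filter

lemma aux_hasDeriv (L α : ℝ) {x : ℝ} (hα : 0 < α) (hx : 0 < x) :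
    HasDerivAt (fun y => Real.exp (-(L*(y-α)^2)/(2*α^2*y)))
      (Real.exp (-(L*(x-α)^2)/(2*α^2*x)) * (L*(α^2-x^2)/(2*α^2*x^2))) x := by
  have hden : (2*α^2*x) ≠ 0 := by positivity
  have h0 : HasDerivAt (fun y : ℝ => (y-α)^2) (2*(x-α)) x := by
    simpa using ((hasDerivAt_id x).sub_const α).fun_pow 2
  have h1 : HasDerivAt (fun y : ℝ => -(L*(y-α)^2)) (-(L*(2*(x-α)))) x :=
    (h0.const_mul L).neg
  have h2 : HasDerivAt (fun y : ℝ => 2*α^2*y) (2*α^2) x := by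
    simpa using (hasDerivAt_id x).const_mul (2*α^2)
  have h3 := h1.div h2 hden
  have h4 : (-(L*(2*(x-α))) * (2*α^2*x) - -(L*(x-α)^2)*(2*α^2))/(2*α^2*x)^2
      = L*(α^2-x^2)/(2*α^2*x^2) := by
    field_simp
    ring
  rw [h4] at h3
  exact h3.exp

lemma aux_sq_le_exp {t : ℝ} (ht : 0 ≤ t) : t^2 ≤ 4 * Real.exp t := by
  have h1 : t/2 + 1 ≤ Real.exp (t/2) := Real.add_one_le_exp _
  have h2 : Real.exp (t/2) * Real.exp (t/2) = Real.exp t := by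
    rw [← Real.exp_add]; ring_nf
  nlinarith [Real.exp_pos (t/2)]

lemma aux_integral (L α b : ℝ) (hL : 0 < L) (hα : 0 < α) (hb0 : 0 < b) (hbα : b < α) :
    ∫⁻ x in Set.Ioc 0 b, ENNReal.ofReal (Real.exp (-(L*(x-α)^2)/(2*α^2*x)) * (L*(α^2-x^2)/(2*α^2*x^2)))
      ≤ ENNReal.ofReal (Real.exp (-(L*(b-α)^2)/(2*α^2*b))) := by
  set D : ℝ → ℝ := fun x => Real.exp (-(L*(x-α)^2)/(2*α^2*x)) * (L*(α^2-x^2)/(2*α^2*x^2)) with hD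
  have hDmeas : Measurable D := by fun_prop
  have hDnn : ∀ x ∈ Set.Ioc 0 b, 0 ≤ D x := by
    intro x hx
    have hx0 : 0 < x := hx.1
    have hxb : x ≤ b := hx.2
    have : 0 ≤ α^2 - x^2 := by nlinarith
    have : 0 ≤ L*(α^2-x^2)/(2*α^2*x^2) := by positivity
    positivity
  set c : ℝ := L*(α-b)^2/(2*α^2) with hc
  have hc0 : 0 < c := by
    have h1 : 0 < (α - b)^2 := by nlinarith
    positivity
  have hDbdd : ∀ x ∈ Set.Ioc 0 b, D x ≤ 2*L/c^2 := by
    intro x hx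
    have hx0 : 0 < x := hx.1
    have hxb : x ≤ b := hx.2
    have h1 : Real.exp (-(L*(x-α)^2)/(2*α^2*x)) ≤ Real.exp (-(c/x)) := by
      apply Real.exp_le_exp.2
      have hnum : (α-b)^2 ≤ (x-α)^2 := by
        nlinarith [mul_nonneg (sub_nonneg.2 hxb) (show (0:ℝ) ≤ 2*α - x - b by linarith)]
      rw [hc, div_div, neg_div, neg_le_neg_iff,
        div_le_div_iff₀ (by positivity) (by positivity)]
      nlinarith [mul_le_mul_of_nonneg_right (mul_le_mul_of_nonneg_left hnum hL.le)
        (show (0:ℝ) ≤ 2*α^2*x by positivity)]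
    have h2 : Real.exp (-(c/x)) ≤ 4*x^2/c^2 := by
      have ht : 0 < c/x := by positivity
      have h3 := aux_sq_le_exp ht.le
      have h4 : (Real.exp (c/x))⁻¹ ≤ 4/(c/x)^2 := by
        rw [inv_eq_one_div, div_le_div_iff₀ (Real.exp_pos _) (by positivity)]
        nlinarith
      have h5 : 4/(c/x)^2 = 4*x^2/c^2 := by
        field_simp
      rw [Real.exp_neg]
      linarith
    have hF1 : L*(α^2-x^2)/(2*α^2*x^2) ≤ L/(2*x^2) := by
      rw [div_le_div_iff₀ (by positivity) (by positivity)]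
      nlinarith [mul_nonneg (mul_nonneg hL.le (sq_nonneg x)) (sq_nonneg x)]
    have hF0 : 0 ≤ L*(α^2-x^2)/(2*α^2*x^2) := by
      have : 0 ≤ α^2 - x^2 := by nlinarith
      positivity
    calc D x ≤ (4*x^2/c^2) * (L/(2*x^2)) :=
          mul_le_mul (h1.trans h2) hF1 hF0 (by positivity)
      _ = 2*L/c^2 := by field_simp; ring
  have hInt : IntegrableOn D (Set.Ioc 0 b) := by
    apply Measure.integrableOn_of_bounded (M := 2*L/c^2) measure_Ioc_lt_top.ne
      hDmeas.aestronglyMeasurable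
    rw [ae_restrict_iff' measurableSet_Ioc]
    exact ae_of_all _ fun x hx => by
      rw [Real.norm_eq_abs, abs_of_nonneg (hDnn x hx)]; exact hDbdd x hx
  have hUnion : (⋃ n : ℕ, Set.Ioc (b/(n+1)) b) = Set.Ioc 0 b := by
    ext x
    simp only [Set.mem_iUnion, Set.mem_Ioc]
    constructor
    · rintro ⟨n, hn1, hn2⟩
      exact ⟨lt_trans (by positivity) hn1, hn2⟩
    · rintro ⟨hx0, hxb⟩
      obtain ⟨n, hn⟩ := exists_nat_gt (b/x)
      refine ⟨n, ?_, hxb⟩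
      rw [div_lt_iff₀ (by positivity)]
      rw [div_lt_iff₀ hx0] at hn
      nlinarith
  have hmono : Monotone (fun n : ℕ => Set.Ioc (b/(n+1)) b) := by
    intro n m hnm
    apply Set.Ioc_subset_Ioc_left
    have hcast : ((n:ℝ)+1) ≤ ((m:ℝ)+1) := by
      have := (Nat.cast_le (α := ℝ)).2 hnm; linarith
    exact div_le_div_of_nonneg_left hb0.le (by positivity) hcast
  have htend : Tendsto (fun n : ℕ => ∫ x in Set.Ioc (b/(n+1)) b, D x) atTop
      (nhds (∫ x in Set.Ioc 0 b, D x)) := by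
    have := tendsto_setIntegral_of_monotone (fun n : ℕ => measurableSet_Ioc) hmono
      (hUnion ▸ hInt)
    rwa [hUnion] at this
  have hstep : ∀ n : ℕ, ∫ x in Set.Ioc (b/(n+1)) b, D x ≤ Real.exp (-(L*(b-α)^2)/(2*α^2*b)) := by
    intro n
    set t : ℝ := b/(n+1) with htd
    have ht0 : 0 < t := by positivity
    have htb : t ≤ b := by
      rw [htd, div_le_iff₀ (by positivity)]
      nlinarith [Nat.cast_nonneg (α := ℝ) n]
    have hderiv : ∀ x ∈ Set.uIcc t b, HasDerivAt (fun y => Real.exp (-(L*(y-α)^2)/(2*α^2*y))) (D x) x := by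
      intro x hx
      rw [Set.uIcc_of_le htb] at hx
      exact aux_hasDeriv L α hα (lt_of_lt_of_le ht0 hx.1)
    have hii : IntervalIntegrable D volume t b := by
      rw [intervalIntegrable_iff, Set.uIoc_of_le htb]
      exact hInt.mono_set (Set.Ioc_subset_Ioc_left ht0.le)
    have hftc := intervalIntegral.integral_eq_sub_of_hasDerivAt hderiv hii
    rw [← intervalIntegral.integral_of_le htb, hftc]
    have := Real.exp_pos (-(L*(t-α)^2)/(2*α^2*t))
    linarith
  have hle : ∫ x in Set.Ioc 0 b, D x ≤ Real.exp (-(L*(b-α)^2)/(2*α^2*b)) :=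
    le_of_tendsto htend (Filter.Eventually.of_forall hstep)
  have hnnae : 0 ≤ᵐ[volume.restrict (Set.Ioc 0 b)] D :=
    (ae_restrict_iff' measurableSet_Ioc).2 (ae_of_all _ hDnn)
  have heq : ∫⁻ x in Set.Ioc 0 b, ENNReal.ofReal (D x) = ENNReal.ofReal (∫ x in Set.Ioc 0 b, D x) :=
    (ofReal_integral_eq_lintegral_ofReal hInt hnnae).symm
  calc ∫⁻ x in Set.Ioc 0 b, ENNReal.ofReal (D x) = ENNReal.ofReal (∫ x in Set.Ioc 0 b, D x) := heq
    _ ≤ ENNReal.ofReal (Real.exp (-(L*(b-α)^2)/(2*α^2*b))) := ENNReal.ofReal_le_ofReal hle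

set_option maxHeartbeats 1000000 in
/-- Lower-tail estimate for an inverse Gaussian random variable with parameters
`μ̂ = α`, `λ = α²/ε^{2p}`: for `0 < δ < min{1, α/2}`,
`P(X ≤ α - δ) ≤ (ε^p/δ)√(α/(2π)) e^{-δ²/(2αε^{2p})} + (ε^p/√(8πα)) e^{-δ²/(2αε^{2p})}`. -/
theorem inverseGaussian_lower_tail
    {Ω : Type*} [MeasurableSpace Ω] (μ : Measure Ω) [IsProbabilityMeasure μ]
    (X : Ω → ℝ) (hX : Measurable X) (α ε p : ℝ) (hα : 0 < α)
    (hε0 : 0 < ε) (hε1 : ε < 1) (hp : 1 < p)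
    (hdens : ∀ s : Set ℝ, MeasurableSet s →
      μ (X ⁻¹' s) = ∫⁻ x in s ∩ Set.Ioi 0,
        ENNReal.ofReal (Real.sqrt ((α^2 / ε ^ (2*p)) / (2 * Real.pi * x^3)) *
          Real.exp (-((α^2 / ε ^ (2*p)) * (x - α)^2) / (2 * α^2 * x))))
    (δ : ℝ) (hδ0 : 0 < δ) (hδ : δ < min 1 (α/2)) :
    μ {ω | X ω ≤ α - δ}
      ≤ ENNReal.ofReal (ε ^ p / δ * Real.sqrt (α / (2 * Real.pi)) *
            Real.exp (-δ^2 / (2 * α * ε ^ (2*p)))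
          + ε ^ p / Real.sqrt (8 * Real.pi * α) *
            Real.exp (-δ^2 / (2 * α * ε ^ (2*p)))) := by
  have hπ : 0 < Real.pi := Real.pi_pos
  have hδα : δ < α/2 := lt_of_lt_of_le hδ (min_le_right _ _)
  have hq : 0 < ε ^ p := Real.rpow_pos_of_pos hε0 p
  have hε2p : ε ^ (2*p) = (ε^p)^2 := by rw [two_mul, Real.rpow_add hε0, sq]
  set L := α^2 / ε^(2*p) with hLdef
  have hL : 0 < L := by rw [hLdef, hε2p]; positivity
  have hLq : L * (ε^p)^2 = α^2 := by rw [hLdef, hε2p]; field_simp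
  set b := α - δ with hbdef
  have hb0 : 0 < b := by rw [hbdef]; linarith
  have hbα : b < α := by rw [hbdef]; linarith
  have hpre : {ω | X ω ≤ α - δ} = X ⁻¹' (Set.Iic b) := by
    ext ω; simp [hbdef]
  have hIic : Set.Iic b ∩ Set.Ioi 0 = Set.Ioc 0 b := by
    ext x; simp only [Set.mem_inter_iff, Set.mem_Iic, Set.mem_Ioi, Set.mem_Ioc]
    exact and_comm
  set C := 2*(ε^p)*α*Real.sqrt b/(δ*(2*α-δ)*Real.sqrt (2*Real.pi)) with hCdef
  have hC0 : 0 < C := by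
    rw [hCdef]
    apply div_pos
    · have := Real.sqrt_pos.2 hb0; positivity
    · have : 0 < Real.sqrt (2*Real.pi) := Real.sqrt_pos.2 (by positivity)
      have h2αδ : 0 < 2*α - δ := by linarith
      positivity
  have h2αδ : 0 < 2*α - δ := by linarith
  have hq2 : (ε^p)^2 = α^2/L := by
    rw [eq_div_iff hL.ne', mul_comm]; exact hLq
  have hCsq : C^2 = 4*(ε^p)^2*α^2*b/((δ*(2*α-δ))^2*(2*Real.pi)) := by
    rw [hCdef, div_pow]
    rw [show (2*(ε^p)*α*Real.sqrt b)^2 = (2*(ε^p)*α)^2 * (Real.sqrt b)^2 by ring]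
    rw [show (δ*(2*α-δ)*Real.sqrt (2*Real.pi))^2
        = (δ*(2*α-δ))^2 * (Real.sqrt (2*Real.pi))^2 by ring]
    rw [Real.sq_sqrt hb0.le, Real.sq_sqrt (by positivity : (0:ℝ) ≤ 2*Real.pi)]
    ring
  have hCsq' : C^2 = 4*α^4*b/(L*((δ*(2*α-δ))^2*(2*Real.pi))) := by
    rw [hCsq, hq2]
    field_simp
    try ring
    try simp
  -- pointwise bound on the density
  have hpoint : ∀ x ∈ Set.Ioc 0 b,
      Real.sqrt (L / (2*Real.pi*x^3)) * Real.exp (-(L*(x-α)^2)/(2*α^2*x))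
        ≤ C * (Real.exp (-(L*(x-α)^2)/(2*α^2*x)) * (L*(α^2-x^2)/(2*α^2*x^2))) := by
    intro x hx
    have hx0 : 0 < x := hx.1
    have hxb : x ≤ b := hx.2
    have hxα : x < α := lt_of_le_of_lt hxb hbα
    have hax : 0 < α^2 - x^2 := by nlinarith
    have hFkey : Real.sqrt (L/(2*Real.pi*x^3)) ≤ C * (L*(α^2-x^2)/(2*α^2*x^2)) := by
      have hrhs0 : 0 ≤ C * (L*(α^2-x^2)/(2*α^2*x^2)) := by positivity
      have hsqle : L/(2*Real.pi*x^3) ≤ (C * (L*(α^2-x^2)/(2*α^2*x^2)))^2 := by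
        rw [mul_pow, hCsq', div_pow, div_mul_div_comm,
          div_le_div_iff₀ (by positivity)
            (mul_pos (mul_pos hL (mul_pos (pow_pos (mul_pos hδ0 h2αδ) 2)
              (by positivity))) (by positivity))]
        have key : x * (δ*(2*α-δ))^2 ≤ b * (α^2-x^2)^2 := by
          have h1 : δ*(2*α-δ) ≤ α^2 - x^2 := by nlinarith
          have h2 : (δ*(2*α-δ))^2 ≤ (α^2-x^2)^2 :=
            pow_le_pow_left₀ (by positivity) h1 2
          exact mul_le_mul hxb h2 (by positivity) hb0.le
        have key2 := mul_le_mul_of_nonneg_left key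
          (show (0:ℝ) ≤ 8*Real.pi*L^2*α^4*x^3 by positivity)
        nlinarith [key2]
      calc Real.sqrt (L/(2*Real.pi*x^3))
          ≤ Real.sqrt ((C * (L*(α^2-x^2)/(2*α^2*x^2)))^2) := Real.sqrt_le_sqrt hsqle
        _ = C * (L*(α^2-x^2)/(2*α^2*x^2)) := Real.sqrt_sq hrhs0
    refine le_trans (mul_le_mul_of_nonneg_right hFkey (Real.exp_nonneg _)) (le_of_eq (by ring))
  -- the two final real inequalities
  have hid : Real.sqrt (α/(2*Real.pi)) / (2*α) = 1/Real.sqrt (8*Real.pi*α) := by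
    have hm : Real.sqrt (α/(2*Real.pi)) * Real.sqrt (8*Real.pi*α) = 2*α := by
      rw [← Real.sqrt_mul (by positivity)]
      rw [show (α/(2*Real.pi))*(8*Real.pi*α) = (2*α)^2 by field_simp; ring]
      exact Real.sqrt_sq (by positivity)
    rw [div_eq_div_iff (by positivity : (0:ℝ) < 2*α).ne'
      (Real.sqrt_pos.2 (by positivity : (0:ℝ) < 8*Real.pi*α)).ne']
    linarith [hm]
  have hCK : C ≤ ε^p/δ*Real.sqrt (α/(2*Real.pi)) + ε^p/Real.sqrt (8*Real.pi*α) := by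
    have hmid : C ≤ ε^p*Real.sqrt (α/(2*Real.pi))*(2*α+δ)/(2*α*δ) := by
      have hsq : C^2 ≤ (ε^p*Real.sqrt (α/(2*Real.pi))*(2*α+δ)/(2*α*δ))^2 := by
        have hrw : (ε^p*Real.sqrt (α/(2*Real.pi))*(2*α+δ)/(2*α*δ))^2
            = (ε^p)^2*α*(2*α+δ)^2/((2*α*δ)^2*(2*Real.pi)) := by
          rw [div_pow,
            show (ε^p*Real.sqrt (α/(2*Real.pi))*(2*α+δ))^2
              = (ε^p)^2*(Real.sqrt (α/(2*Real.pi)))^2*(2*α+δ)^2 by ring,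
            Real.sq_sqrt (by positivity : (0:ℝ) ≤ α/(2*Real.pi))]
          field_simp
        rw [hCsq, hrw, div_le_div_iff₀
          (mul_pos (pow_pos (mul_pos hδ0 h2αδ) 2) (by positivity)) (by positivity)]
        have hpoly : 16*α^4*b ≤ (4*α^2-δ^2)^2 * α := by
          rw [hbdef]
          have h₁ : (0:ℝ) ≤ α*δ*(16*α^3-8*α^2*δ+δ^3) := by
            have : 8*α^2*δ ≤ 8*α^2*(α/2) := by nlinarith [sq_nonneg α]
            have : (0:ℝ) ≤ 16*α^3-8*α^2*δ+δ^3 := by nlinarith [pow_pos hδ0 3]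
            positivity
          nlinarith [h₁]
        have key3 := mul_le_mul_of_nonneg_left hpoly
          (show (0:ℝ) ≤ 2*Real.pi*(ε^p)^2*δ^2 by positivity)
        nlinarith [key3]
      calc C = Real.sqrt (C^2) := (Real.sqrt_sq hC0.le).symm
        _ ≤ Real.sqrt ((ε^p*Real.sqrt (α/(2*Real.pi))*(2*α+δ)/(2*α*δ))^2) :=
            Real.sqrt_le_sqrt hsq
        _ = _ := Real.sqrt_sq (by positivity)
    have heqsum : ε^p/δ*Real.sqrt (α/(2*Real.pi)) + ε^p/Real.sqrt (8*Real.pi*α)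
        = ε^p*Real.sqrt (α/(2*Real.pi))*(2*α+δ)/(2*α*δ) := by
      rw [div_eq_mul_one_div (ε^p) (Real.sqrt (8*Real.pi*α)), ← hid]
      field_simp
    rw [heqsum]; exact hmid
  have hEE : Real.exp (-(L*(b-α)^2)/(2*α^2*b)) ≤ Real.exp (-δ^2/(2*α*ε^(2*p))) := by
    apply Real.exp_le_exp.2
    have h1 : (b-α)^2 = δ^2 := by rw [hbdef]; ring
    have h2 : ε^(2*p) = α^2/L := by
      rw [hLdef]; field_simp
    have h3 : -δ^2/(2*α*ε^(2*p)) = -(L*δ^2)/(2*α^3) := by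
      rw [h2]; field_simp
    rw [h1, h3, neg_div, neg_div, neg_le_neg_iff]
    exact div_le_div_of_nonneg_left (by positivity) (by positivity) (by nlinarith)
  -- assemble
  rw [hpre, hdens _ measurableSet_Iic, hIic]
  calc ∫⁻ x in Set.Ioc 0 b,
        ENNReal.ofReal (Real.sqrt (L / (2*Real.pi*x^3)) *
          Real.exp (-(L*(x-α)^2)/(2*α^2*x)))
      ≤ ∫⁻ x in Set.Ioc 0 b,
        ENNReal.ofReal (C * (Real.exp (-(L*(x-α)^2)/(2*α^2*x)) *
          (L*(α^2-x^2)/(2*α^2*x^2)))) := by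
        apply setLIntegral_mono (by fun_prop)
        exact fun x hx => ENNReal.ofReal_le_ofReal (hpoint x hx)
    _ = ENNReal.ofReal C * ∫⁻ x in Set.Ioc 0 b,
        ENNReal.ofReal (Real.exp (-(L*(x-α)^2)/(2*α^2*x)) *
          (L*(α^2-x^2)/(2*α^2*x^2))) := by
        simp_rw [ENNReal.ofReal_mul hC0.le]
        exact lintegral_const_mul' _ _ ENNReal.ofReal_ne_top
    _ ≤ ENNReal.ofReal C * ENNReal.ofReal (Real.exp (-(L*(b-α)^2)/(2*α^2*b))) :=
        by gcongr; exact aux_integral L α b hL hα hb0 hbα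
    _ = ENNReal.ofReal (C * Real.exp (-(L*(b-α)^2)/(2*α^2*b))) :=
        (ENNReal.ofReal_mul hC0.le).symm
    _ ≤ _ := by
        apply ENNReal.ofReal_le_ofReal
        have hKnn : 0 ≤ ε^p/δ*Real.sqrt (α/(2*Real.pi)) + ε^p/Real.sqrt (8*Real.pi*α) := by
          positivity
        calc C * Real.exp (-(L*(b-α)^2)/(2*α^2*b))
            ≤ (ε^p/δ*Real.sqrt (α/(2*Real.pi)) + ε^p/Real.sqrt (8*Real.pi*α)) *
              Real.exp (-δ^2/(2*α*ε^(2*p))) :=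
              mul_le_mul hCK hEE (Real.exp_nonneg _) hKnn
          _ = _ := by ring
end

section
/- Let X have the inverse Gaussian distribution with parameters μ̂ = α > 0 and λ = α²/ε^{2p}, ε ∈ (0,1), p > 1. Then there exists a constant K > 0, depending only on α, such that for all δ with 0 < δ < min{1, α/2}, P(|X - α| ≥ δ) ≤ K·(ε^p/δ)·exp(-δ²/(4αε^{2p})). -/
open MeasureTheory Real Set

section InverseGaussianAux

open Filter Topology

/-- Derivative of `-θ·exp(-(x-α)²/(2θx))` for `x > 0`. -/
lemma ig_hasDerivAt (α θ : ℝ) (hθ : 0 < θ) (x : ℝ) (hx : 0 < x) :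
    HasDerivAt (fun y => -(θ * Real.exp (-((y - α)^2) / (2*θ*y))))
      ((x^2 - α^2)/(2*x^2) * Real.exp (-((x - α)^2) / (2*θ*x))) x := by
  have h1 : HasDerivAt (fun y : ℝ => -((y - α)^2)) (-(2*(x - α))) x := by
    simpa using (((hasDerivAt_id x).sub_const α).fun_pow 2).fun_neg
  have h2 : HasDerivAt (fun y : ℝ => 2*θ*y) (2*θ) x := by
    simpa using (hasDerivAt_id x).const_mul (2*θ)
  have h3 := h1.fun_div h2 (by positivity)
  have h4 := (h3.exp.const_mul θ).fun_neg
  refine h4.congr_deriv ?_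
  have hx' : x ≠ 0 := ne_of_gt hx
  have hθ' : θ ≠ 0 := ne_of_gt hθ
  field_simp
  ring

lemma ig_tendsto_zero (α θ : ℝ) (hθ : 0 < θ) :
    Tendsto (fun y => -(θ * Real.exp (-((y - α)^2) / (2*θ*y)))) atTop (𝓝 0) := by
  have hE : Tendsto (fun y => Real.exp (-((y - α)^2) / (2*θ*y))) atTop (𝓝 0) := by
    apply Real.tendsto_exp_atBot.comp
    have h2 : Tendsto (fun y : ℝ => (2*α - y)/(2*θ)) atTop atBot := by
      have h1 : Tendsto (fun y : ℝ => 2*α - y) atTop atBot := by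
        simpa only [sub_eq_add_neg] using tendsto_atBot_add_const_left atTop (2*α) tendsto_neg_atTop_atBot
      exact h1.atBot_div_const (by positivity)
    apply tendsto_atBot_mono' atTop _ h2
    filter_upwards [eventually_gt_atTop 0] with y hy
    rw [div_le_div_iff₀ (by positivity) (by positivity)]
    nlinarith [sq_nonneg α, hy, hθ]
  have := (hE.const_mul θ).neg
  simpa using this

lemma ig_meas_upper (α θ C : ℝ) : Measurable fun x : ℝ =>
    ENNReal.ofReal (C * ((x^2 - α^2)/(2*x^2) * Real.exp (-((x - α)^2) / (2*θ*x)))) := by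
  apply Measurable.ennreal_ofReal
  apply Measurable.const_mul
  exact (((measurable_id.pow_const 2).sub measurable_const).div
    ((measurable_id.pow_const 2).const_mul 2)).mul
    (Real.measurable_exp.comp ((measurable_id.sub_const α).pow_const 2 |>.neg.div
      (measurable_id.const_mul (2*θ))))

lemma ig_meas_lower (α θ C : ℝ) : Measurable fun x : ℝ =>
    ENNReal.ofReal (C * ((α^2 - x^2)/(2*x^2) * Real.exp (-((x - α)^2) / (2*θ*x)))) := by
  apply Measurable.ennreal_ofReal
  apply Measurable.const_mul
  exact ((measurable_const.sub (measurable_id.pow_const 2)).div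
    ((measurable_id.pow_const 2).const_mul 2)).mul
    (Real.measurable_exp.comp ((measurable_id.sub_const α).pow_const 2 |>.neg.div
      (measurable_id.const_mul (2*θ))))

lemma ig_upper_tail (α θ a C : ℝ) (hθ : 0 < θ) (hα0 : 0 ≤ α) (hαa : α ≤ a) (h0a : 0 < a)
    (hC : 0 ≤ C) :
    ∫⁻ x in Ioi a, ENNReal.ofReal (C * ((x^2 - α^2)/(2*x^2) * Real.exp (-((x - α)^2) / (2*θ*x))))
      ≤ ENNReal.ofReal (C * (θ * Real.exp (-((a - α)^2) / (2*θ*a)))) := by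
  set ψ : ℝ → ℝ := fun x => (x^2 - α^2)/(2*x^2) * Real.exp (-((x - α)^2) / (2*θ*x)) with hψ
  have hderiv : ∀ x ∈ Ici a, HasDerivAt (fun y => -(θ * Real.exp (-((y - α)^2) / (2*θ*y))))
      (ψ x) x := fun x hx => ig_hasDerivAt α θ hθ x (lt_of_lt_of_le h0a hx)
  have hpos : ∀ x ∈ Ioi a, 0 ≤ ψ x := by
    intro x hx
    have hx0 : 0 < x := lt_trans h0a hx
    have h1 : α^2 ≤ x^2 := pow_le_pow_left₀ hα0 (le_trans hαa (le_of_lt hx)) 2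
    exact mul_nonneg (div_nonneg (by linarith) (by positivity)) (Real.exp_nonneg _)
  have hint : IntegrableOn ψ (Ioi a) :=
    integrableOn_Ioi_deriv_of_nonneg' hderiv hpos (ig_tendsto_zero α θ hθ)
  have hval : ∫ x in Ioi a, ψ x = θ * Real.exp (-((a - α)^2) / (2*θ*a)) := by
    rw [integral_Ioi_of_hasDerivAt_of_nonneg' hderiv hpos (ig_tendsto_zero α θ hθ)]
    ring
  have hae : 0 ≤ᶠ[ae (volume.restrict (Ioi a))] fun x => C * ψ x := by
    rw [Filter.EventuallyLE, ae_restrict_iff' measurableSet_Ioi]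
    exact Filter.Eventually.of_forall fun x hx => by
      simpa using mul_nonneg hC (hpos x hx)
  have := (ofReal_integral_eq_lintegral_ofReal (hint.const_mul C) hae).symm
  refine le_of_eq ?_
  rw [this, integral_const_mul, hval]

lemma ig_lower_tail (α θ b C : ℝ) (hθ : 0 < θ) (hb : 0 < b) (hbα : b ≤ α)
    (hC : 0 ≤ C) :
    ∫⁻ x in Ioc 0 b, ENNReal.ofReal (C * ((α^2 - x^2)/(2*x^2) * Real.exp (-((x - α)^2) / (2*θ*x))))
      ≤ ENNReal.ofReal (C * (θ * Real.exp (-((b - α)^2) / (2*θ*b)))) := by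
  have hgm := ig_meas_lower α θ C
  have hcover : AECover ((volume : Measure ℝ).restrict (Ioc 0 b)) atTop
      (fun n : ℕ => Ioc (b/(n:ℝ)) b) :=
    aecover_Ioc_of_Ioc (tendsto_const_div_atTop_nhds_zero_nat b) tendsto_const_nhds
  have htend := hcover.lintegral_tendsto_of_nat hgm.aemeasurable
  refine le_of_tendsto htend ?_
  filter_upwards [eventually_ge_atTop 1] with n hn
  have hn0 : (0:ℝ) < n := by exact_mod_cast Nat.lt_of_lt_of_le Nat.zero_lt_one hn
  set c : ℝ := b/(n:ℝ) with hc
  have hc0 : 0 < c := by positivity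
  have hcb : c ≤ b := div_le_self hb.le (by exact_mod_cast hn)
  rw [Measure.restrict_restrict measurableSet_Ioc,
    inter_eq_self_of_subset_left (Ioc_subset_Ioc_left hc0.le)]
  have hcont : ContinuousOn (fun x => C * ((α^2 - x^2)/(2*x^2) *
      Real.exp (-((x - α)^2) / (2*θ*x)))) (Icc c b) := by
    apply continuousOn_const.mul
    apply ContinuousOn.mul
    · exact ContinuousOn.div (by fun_prop) (by fun_prop)
        (fun x hx => by have hx0 : (0:ℝ) < x := lt_of_lt_of_le hc0 hx.1; positivity)
    · exact Real.continuous_exp.comp_continuousOn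
        (ContinuousOn.div (by fun_prop) (by fun_prop)
          (fun x hx => by have h1 := hx.1; have : (0:ℝ) < x := lt_of_lt_of_le hc0 h1; positivity))
  have hint : IntegrableOn (fun x => C * ((α^2 - x^2)/(2*x^2) *
      Real.exp (-((x - α)^2) / (2*θ*x)))) (Ioc c b) :=
    (hcont.integrableOn_compact isCompact_Icc).mono_set Ioc_subset_Icc_self
  have hae : 0 ≤ᶠ[ae (volume.restrict (Ioc c b))] fun x =>
      C * ((α^2 - x^2)/(2*x^2) * Real.exp (-((x - α)^2) / (2*θ*x))) := by
    rw [Filter.EventuallyLE, ae_restrict_iff' measurableSet_Ioc]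
    refine Filter.Eventually.of_forall fun x hx => ?_
    have hx0 : 0 < x := lt_trans hc0 hx.1
    have h1 : x^2 ≤ α^2 := pow_le_pow_left₀ hx0.le (le_trans hx.2 hbα) 2
    simpa using mul_nonneg hC (mul_nonneg (div_nonneg (by linarith) (by positivity))
      (Real.exp_nonneg _))
  rw [← ofReal_integral_eq_lintegral_ofReal hint hae]
  have hderiv : ∀ x ∈ uIcc c b, HasDerivAt
      (fun y => C * (θ * Real.exp (-((y - α)^2) / (2*θ*y))))
      (C * ((α^2 - x^2)/(2*x^2) * Real.exp (-((x - α)^2) / (2*θ*x)))) x := by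
    intro x hx
    rw [uIcc_of_le hcb] at hx
    have hx0 : 0 < x := lt_of_lt_of_le hc0 hx.1
    have h := ((ig_hasDerivAt α θ hθ x hx0).fun_neg).const_mul C
    simp only [neg_neg] at h
    refine h.congr_deriv ?_
    ring
  have hii : IntervalIntegrable (fun x => C * ((α^2 - x^2)/(2*x^2) *
      Real.exp (-((x - α)^2) / (2*θ*x)))) volume c b := by
    apply ContinuousOn.intervalIntegrable
    rwa [uIcc_of_le hcb]
  have hftc := intervalIntegral.integral_eq_sub_of_hasDerivAt hderiv hii
  rw [intervalIntegral.integral_of_le hcb] at hftc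
  rw [hftc]
  apply ENNReal.ofReal_le_ofReal
  have : 0 ≤ C * (θ * Real.exp (-((c - α)^2) / (2*θ*c))) := by positivity
  linarith

lemma ig_sqrt_le (α θ q x : ℝ) (hα : 0 < α) (hq : 0 < q) (hθq : θ = q*q) (hx : 0 < x) :
    Real.sqrt ((α^2 / θ) / (2 * Real.pi * x^3)) ≤ α/(q*(x*Real.sqrt x)) := by
  have hθ : 0 < θ := by rw [hθq]; positivity
  have hs2 : Real.sqrt x ^ 2 = x := Real.sq_sqrt hx.le
  have hsq : (q*(x*Real.sqrt x))^2 = θ*x^3 := by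
    rw [mul_pow, mul_pow, hs2, hθq]; ring
  have h2 : (α/(q*(x*Real.sqrt x)))^2 = α^2/(θ*x^3) := by
    rw [div_pow, hsq]
  have hle : (α^2 / θ) / (2 * Real.pi * x^3) ≤ (α/(q*(x*Real.sqrt x)))^2 := by
    rw [h2, div_div]
    apply div_le_div_of_nonneg_left (by positivity) (by positivity)
    nlinarith [Real.pi_gt_three, pow_pos hx 3, hθ]
  calc Real.sqrt ((α^2 / θ) / (2 * Real.pi * x^3))
      ≤ Real.sqrt ((α/(q*(x*Real.sqrt x)))^2) := Real.sqrt_le_sqrt hle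
    _ = α/(q*(x*Real.sqrt x)) := Real.sqrt_sq (by positivity)

lemma ig_density_le_upper (α θ q δ x : ℝ) (hα : 0 < α) (hq : 0 < q) (hθq : θ = q*q)
    (hδ : 0 < δ) (hxa : α + δ ≤ x) :
    Real.sqrt ((α^2 / θ) / (2 * Real.pi * x^3)) *
        Real.exp (-((α^2 / θ) * (x - α)^2) / (2 * α^2 * x))
      ≤ (2*Real.sqrt (α+δ)/(q*δ)) *
        ((x^2 - α^2)/(2*x^2) * Real.exp (-((x - α)^2) / (2*θ*x))) := by
  have hx : 0 < x := by linarith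
  have hθ : 0 < θ := by rw [hθq]; positivity
  have hexp : -((α^2 / θ) * (x - α)^2) / (2 * α^2 * x) = -((x - α)^2) / (2*θ*x) := by
    field_simp
  rw [hexp]
  have hsx : Real.sqrt x * Real.sqrt x = x := Real.mul_self_sqrt hx.le
  have h1 : δ*Real.sqrt x ≤ Real.sqrt (α+δ)*(x-α) := by
    calc δ*Real.sqrt x = Real.sqrt (δ^2*x) := by
          rw [Real.sqrt_mul (sq_nonneg δ), Real.sqrt_sq hδ.le]
      _ ≤ Real.sqrt ((α+δ)*(x-α)^2) := Real.sqrt_le_sqrt (by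
          have ht : (0:ℝ) ≤ x - α - δ := by linarith
          nlinarith [mul_nonneg ht (mul_nonneg hδ.le hα.le),
            mul_nonneg ht (mul_nonneg hδ.le hδ.le),
            mul_nonneg (mul_nonneg ht ht) (show (0:ℝ) ≤ α + δ by linarith)])
      _ = Real.sqrt (α+δ)*(x-α) := by
          rw [Real.sqrt_mul (by positivity), Real.sqrt_sq (by linarith)]
  have h2 := mul_le_mul_of_nonneg_right h1
    (show (0:ℝ) ≤ (x+α)*(x*Real.sqrt x) by positivity)
  have hsub : δ*Real.sqrt x*((x+α)*(x*Real.sqrt x)) = δ*((x+α)*(x*x)) := by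
    rw [show δ*Real.sqrt x*((x+α)*(x*Real.sqrt x))
      = δ*((x+α)*x)*(Real.sqrt x*Real.sqrt x) from by ring, hsx]
    ring
  rw [hsub] at h2
  have key : α*(δ*x^2) ≤ Real.sqrt (α+δ)*(x^2-α^2)*(x*Real.sqrt x) := by
    calc α*(δ*x^2) ≤ δ*((x+α)*(x*x)) := by
          nlinarith [mul_nonneg hδ.le (mul_nonneg (mul_nonneg hx.le hx.le) hx.le)]
      _ ≤ Real.sqrt (α+δ)*(x-α)*((x+α)*(x*Real.sqrt x)) := h2
      _ = Real.sqrt (α+δ)*(x^2-α^2)*(x*Real.sqrt x) := by ring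
  have hmain : α/(q*(x*Real.sqrt x)) ≤ 2*Real.sqrt (α+δ)/(q*δ)*((x^2-α^2)/(2*x^2)) := by
    have hrw : 2*Real.sqrt (α+δ)/(q*δ)*((x^2-α^2)/(2*x^2))
        = (Real.sqrt (α+δ)*(x^2-α^2))/(q*(δ*x^2)) := by
      field_simp
    rw [hrw, div_le_div_iff₀ (by positivity) (by positivity)]
    nlinarith [mul_le_mul_of_nonneg_left key hq.le]
  calc Real.sqrt ((α^2 / θ) / (2 * Real.pi * x^3)) * Real.exp (-((x - α)^2) / (2*θ*x))
      ≤ (α/(q*(x*Real.sqrt x))) * Real.exp (-((x - α)^2) / (2*θ*x)) :=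
        mul_le_mul_of_nonneg_right (ig_sqrt_le α θ q x hα hq hθq hx) (Real.exp_nonneg _)
    _ ≤ (2*Real.sqrt (α+δ)/(q*δ)*((x^2-α^2)/(2*x^2))) * Real.exp (-((x - α)^2) / (2*θ*x)) :=
        mul_le_mul_of_nonneg_right hmain (Real.exp_nonneg _)
    _ = (2*Real.sqrt (α+δ)/(q*δ)) * ((x^2 - α^2)/(2*x^2) * Real.exp (-((x - α)^2) / (2*θ*x))) := by
        ring

lemma ig_density_le_lower (α θ q δ x : ℝ) (hα : 0 < α) (hq : 0 < q) (hθq : θ = q*q)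
    (hδ : 0 < δ) (hδα : δ < α) (hx : 0 < x) (hxa : x ≤ α - δ) :
    Real.sqrt ((α^2 / θ) / (2 * Real.pi * x^3)) *
        Real.exp (-((α^2 / θ) * (x - α)^2) / (2 * α^2 * x))
      ≤ (2*Real.sqrt (α-δ)/(q*δ)) *
        ((α^2 - x^2)/(2*x^2) * Real.exp (-((x - α)^2) / (2*θ*x))) := by
  have hθ : 0 < θ := by rw [hθq]; positivity
  have hexp : -((α^2 / θ) * (x - α)^2) / (2 * α^2 * x) = -((x - α)^2) / (2*θ*x) := by
    field_simp
  rw [hexp]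
  have hsx : Real.sqrt x * Real.sqrt x = x := Real.mul_self_sqrt hx.le
  have h1 : δ*Real.sqrt x ≤ Real.sqrt (α-δ)*(α-x) := by
    calc δ*Real.sqrt x = Real.sqrt (δ^2*x) := by
          rw [Real.sqrt_mul (sq_nonneg δ), Real.sqrt_sq hδ.le]
      _ ≤ Real.sqrt ((α-δ)*(α-x)^2) := Real.sqrt_le_sqrt (by
          have ht : (0:ℝ) ≤ α - δ - x := by linarith
          have hαδ : (0:ℝ) ≤ α - δ := by linarith
          nlinarith [mul_nonneg ht (mul_nonneg hδ.le hαδ),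
            mul_nonneg ht (mul_nonneg hδ.le hδ.le),
            mul_nonneg (mul_nonneg ht ht) hαδ])
      _ = Real.sqrt (α-δ)*(α-x) := by
          rw [Real.sqrt_mul (by linarith), Real.sqrt_sq (by linarith)]
  have h2 := mul_le_mul_of_nonneg_right h1
    (show (0:ℝ) ≤ (α+x)*(x*Real.sqrt x) by positivity)
  have hsub : δ*Real.sqrt x*((α+x)*(x*Real.sqrt x)) = δ*((α+x)*(x*x)) := by
    rw [show δ*Real.sqrt x*((α+x)*(x*Real.sqrt x))
      = δ*((α+x)*x)*(Real.sqrt x*Real.sqrt x) from by ring, hsx]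
    ring
  rw [hsub] at h2
  have key : α*(δ*x^2) ≤ Real.sqrt (α-δ)*(α^2-x^2)*(x*Real.sqrt x) := by
    calc α*(δ*x^2) ≤ δ*((α+x)*(x*x)) := by
          nlinarith [mul_nonneg hδ.le (mul_nonneg (mul_nonneg hx.le hx.le) hx.le)]
      _ ≤ Real.sqrt (α-δ)*(α-x)*((α+x)*(x*Real.sqrt x)) := h2
      _ = Real.sqrt (α-δ)*(α^2-x^2)*(x*Real.sqrt x) := by ring
  have hmain : α/(q*(x*Real.sqrt x)) ≤ 2*Real.sqrt (α-δ)/(q*δ)*((α^2-x^2)/(2*x^2)) := by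
    have hrw : 2*Real.sqrt (α-δ)/(q*δ)*((α^2-x^2)/(2*x^2))
        = (Real.sqrt (α-δ)*(α^2-x^2))/(q*(δ*x^2)) := by
      field_simp
    rw [hrw, div_le_div_iff₀ (by positivity) (by positivity)]
    nlinarith [mul_le_mul_of_nonneg_left key hq.le]
  calc Real.sqrt ((α^2 / θ) / (2 * Real.pi * x^3)) * Real.exp (-((x - α)^2) / (2*θ*x))
      ≤ (α/(q*(x*Real.sqrt x))) * Real.exp (-((x - α)^2) / (2*θ*x)) :=
        mul_le_mul_of_nonneg_right (ig_sqrt_le α θ q x hα hq hθq hx) (Real.exp_nonneg _)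
    _ ≤ (2*Real.sqrt (α-δ)/(q*δ)*((α^2-x^2)/(2*x^2))) * Real.exp (-((x - α)^2) / (2*θ*x)) :=
        mul_le_mul_of_nonneg_right hmain (Real.exp_nonneg _)
    _ = (2*Real.sqrt (α-δ)/(q*δ)) * ((α^2 - x^2)/(2*x^2) * Real.exp (-((x - α)^2) / (2*θ*x))) := by
        ring

end InverseGaussianAux

/-- Two-sided deviation estimate for the inverse Gaussian first passage time:
there is `K > 0`, depending only on `α`, such that for all `ε ∈ (0,1)`, `p > 1`
and `0 < δ < min{1, α/2}`, `P(|X - α| ≥ δ) ≤ K (ε^p/δ) exp(-δ²/(4αε^{2p}))`. -/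
theorem inverseGaussian_deviation (α : ℝ) (hα : 0 < α) :
    ∃ K : ℝ, 0 < K ∧
      ∀ (Ω : Type) (mΩ : MeasurableSpace Ω) (μ : Measure Ω),
        IsProbabilityMeasure μ →
      ∀ (X : Ω → ℝ), Measurable X →
      ∀ (ε p : ℝ), 0 < ε → ε < 1 → 1 < p →
      (∀ s : Set ℝ, MeasurableSet s →
        μ (X ⁻¹' s) = ∫⁻ x in s ∩ Set.Ioi 0,
          ENNReal.ofReal (Real.sqrt ((α^2 / ε ^ (2*p)) / (2 * Real.pi * x^3)) *
            Real.exp (-((α^2 / ε ^ (2*p)) * (x - α)^2) / (2 * α^2 * x)))) →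
      ∀ δ : ℝ, 0 < δ → δ < min 1 (α/2) →
        μ {ω | δ ≤ |X ω - α|}
          ≤ ENNReal.ofReal (K * (ε ^ p / δ) *
              Real.exp (-δ^2 / (4 * α * ε ^ (2*p)))) := by
  refine ⟨4 * Real.sqrt (2*α), by positivity, ?_⟩
  intro Ω mΩ μ hprob X hX ε p hε hε1 hp hdens δ hδ hδlt
  obtain ⟨hδ1, hδα2⟩ := lt_min_iff.mp hδlt
  have hαδ : 0 < α - δ := by linarith
  have hδα : δ < α := by linarith
  set q := ε ^ p with hqdef
  have hq : 0 < q := Real.rpow_pos_of_pos hε p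
  set θ := ε ^ (2*p) with hθdef
  have hθq : θ = q*q := by
    rw [hθdef, hqdef, two_mul, Real.rpow_add hε]
  have hθ : 0 < θ := by rw [hθq]; positivity
  -- rewrite the probability as an integral of the density
  have hset : {ω | δ ≤ |X ω - α|} = X ⁻¹' (Iic (α-δ) ∪ Ici (α+δ)) := by
    ext ω
    simp only [mem_setOf_eq, mem_preimage, mem_union, mem_Iic, mem_Ici, le_abs]
    constructor
    · rintro (h | h)
      · right; linarith
      · left; linarith
    · rintro (h | h)
      · right; linarith
      · left; linarith
  rw [hset, hdens _ (measurableSet_Iic.union measurableSet_Ici)]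
  have hsplit : (Iic (α-δ) ∪ Ici (α+δ)) ∩ Ioi 0 = Ioc 0 (α-δ) ∪ Ici (α+δ) := by
    ext x
    simp only [mem_inter_iff, mem_union, mem_Iic, mem_Ici, mem_Ioi, mem_Ioc]
    constructor
    · rintro ⟨h1 | h1, h2⟩
      · exact Or.inl ⟨h2, h1⟩
      · exact Or.inr h1
    · rintro (⟨h1, h2⟩ | h1)
      · exact ⟨Or.inl h2, h1⟩
      · exact ⟨Or.inr h1, by linarith⟩
  rw [hsplit]
  -- constants
  set Cm : ℝ := 2*Real.sqrt (α-δ)/(q*δ) with hCm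
  set Cp : ℝ := 2*Real.sqrt (α+δ)/(q*δ) with hCp
  have hCm0 : 0 ≤ Cm := by positivity
  have hCp0 : 0 ≤ Cp := by positivity
  -- bound each tail
  have hlow : ∫⁻ x in Ioc 0 (α-δ), ENNReal.ofReal
        (Real.sqrt ((α^2 / θ) / (2 * Real.pi * x^3)) *
          Real.exp (-((α^2 / θ) * (x - α)^2) / (2 * α^2 * x)))
      ≤ ENNReal.ofReal (Cm * (θ * Real.exp (-(((α-δ) - α)^2) / (2*θ*(α-δ))))) := by
    refine le_trans (setLIntegral_mono (ig_meas_lower α θ Cm) ?_) ?_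
    · intro x hx
      exact ENNReal.ofReal_le_ofReal
        (ig_density_le_lower α θ q δ x hα hq hθq hδ hδα hx.1 hx.2)
    · exact ig_lower_tail α θ (α-δ) Cm hθ hαδ (by linarith) hCm0
  have hup : ∫⁻ x in Ici (α+δ), ENNReal.ofReal
        (Real.sqrt ((α^2 / θ) / (2 * Real.pi * x^3)) *
          Real.exp (-((α^2 / θ) * (x - α)^2) / (2 * α^2 * x)))
      ≤ ENNReal.ofReal (Cp * (θ * Real.exp (-(((α+δ) - α)^2) / (2*θ*(α+δ))))) := by
    rw [← restrict_Ioi_eq_restrict_Ici]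
    refine le_trans (setLIntegral_mono (ig_meas_upper α θ Cp) ?_) ?_
    · intro x hx
      exact ENNReal.ofReal_le_ofReal
        (ig_density_le_upper α θ q δ x hα hq hθq hδ (le_of_lt hx))
    · exact ig_upper_tail α θ (α+δ) Cp hθ hα.le (by linarith) (by linarith) hCp0
  refine le_trans (lintegral_union_le _ _ _) ?_
  refine le_trans (add_le_add hlow hup) ?_
  rw [← ENNReal.ofReal_add (by positivity) (by positivity)]
  apply ENNReal.ofReal_le_ofReal
  -- final real arithmetic
  have hEm : Real.exp (-(((α-δ) - α)^2) / (2*θ*(α-δ))) ≤ Real.exp (-δ^2 / (4*α*θ)) := by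
    apply Real.exp_le_exp.mpr
    rw [show ((α-δ) - α)^2 = δ^2 by ring, neg_div, neg_div, neg_le_neg_iff]
    exact div_le_div_of_nonneg_left (sq_nonneg δ) (by positivity) (by nlinarith)
  have hEp : Real.exp (-(((α+δ) - α)^2) / (2*θ*(α+δ))) ≤ Real.exp (-δ^2 / (4*α*θ)) := by
    apply Real.exp_le_exp.mpr
    rw [show ((α+δ) - α)^2 = δ^2 by ring, neg_div, neg_div, neg_le_neg_iff]
    exact div_le_div_of_nonneg_left (sq_nonneg δ) (by positivity) (by nlinarith)
  have hs1 : Real.sqrt (α-δ) ≤ Real.sqrt (2*α) := Real.sqrt_le_sqrt (by linarith)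
  have hs2 : Real.sqrt (α+δ) ≤ Real.sqrt (2*α) := Real.sqrt_le_sqrt (by linarith)
  have e1 : Cm * (θ * Real.exp (-(((α-δ) - α)^2) / (2*θ*(α-δ))))
      = (2*Real.sqrt (α-δ)*q/δ) * Real.exp (-(((α-δ) - α)^2) / (2*θ*(α-δ))) := by
    rw [hCm, hθq]; field_simp
  have e2 : Cp * (θ * Real.exp (-(((α+δ) - α)^2) / (2*θ*(α+δ))))
      = (2*Real.sqrt (α+δ)*q/δ) * Real.exp (-(((α+δ) - α)^2) / (2*θ*(α+δ))) := by
    rw [hCp, hθq]; field_simp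
  rw [e1, e2]
  have b1 : (2*Real.sqrt (α-δ)*q/δ) * Real.exp (-(((α-δ) - α)^2) / (2*θ*(α-δ)))
      ≤ (2*Real.sqrt (2*α)*q/δ) * Real.exp (-δ^2 / (4*α*θ)) := by
    apply mul_le_mul _ hEm (Real.exp_nonneg _) (by positivity)
    gcongr
  have b2 : (2*Real.sqrt (α+δ)*q/δ) * Real.exp (-(((α+δ) - α)^2) / (2*θ*(α+δ)))
      ≤ (2*Real.sqrt (2*α)*q/δ) * Real.exp (-δ^2 / (4*α*θ)) := by
    apply mul_le_mul _ hEp (Real.exp_nonneg _) (by positivity)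
    gcongr
  calc (2*Real.sqrt (α-δ)*q/δ) * Real.exp (-(((α-δ) - α)^2) / (2*θ*(α-δ)))
        + (2*Real.sqrt (α+δ)*q/δ) * Real.exp (-(((α+δ) - α)^2) / (2*θ*(α+δ)))
      ≤ (2*Real.sqrt (2*α)*q/δ) * Real.exp (-δ^2 / (4*α*θ))
        + (2*Real.sqrt (2*α)*q/δ) * Real.exp (-δ^2 / (4*α*θ)) := add_le_add b1 b2
    _ = 4 * Real.sqrt (2*α) * (q/δ) * Real.exp (-δ^2 / (4*α*θ)) := by ring
end
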